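/- arXiv:hep-th/9612148 — 5 statements merged into one kernel-verified Lean document; each statement's English description precedes it below -/
import Mathlib

section
/- For the root system A_n, flipping the sign of the k-th simple root gives the recursion: T_{A_n}({(-1)^{δ_{i,k}} ε_i}) = - T_{A_n}({ε_i}) + 2 T_{A_{k-1}}({ε_1,...,ε_{k-1}}) + 2 T_{A_{n-k}}({ε_{k+1},...,ε_n}), where T_{A_m}({ε}) = Σ_{1≤i≤j≤m} ε_i ⋯ ε_j and T_{A_0} = 0. -/
open Finset

/-- `TA n ε = ∑_{0 ≤ i ≤ j < n} ε i ⋯ ε j`, the sign-sum over positive roots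
of `A_n` (simple roots indexed `0, …, n-1`, i.e. `ε l` is the sign `ε_{l+1}`). -/
def TA (n : ℕ) (ε : ℕ → ℤ) : ℤ :=
  ∑ i ∈ Finset.range n, ∑ j ∈ Finset.Ico i n, ∏ l ∈ Finset.Icc i j, ε l

lemma prod_flip (ε : ℕ → ℤ) (m i j : ℕ) :
    (∏ l ∈ Finset.Icc i j, (if l = m then -ε l else ε l)) =
      (if m ∈ Finset.Icc i j then (-1 : ℤ) else 1) * ∏ l ∈ Finset.Icc i j, ε l := by
  have h : ∀ l ∈ Finset.Icc i j,
      (if l = m then -ε l else ε l) = (if l = m then (-1 : ℤ) else 1) * ε l := by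
    intro l _; split <;> ring
  rw [Finset.prod_congr rfl h, Finset.prod_mul_distrib,
    Finset.prod_ite_eq' (Finset.Icc i j) m (fun _ => (-1 : ℤ))]

lemma shift_prod (ε : ℕ → ℤ) (k i j : ℕ) :
    ∏ l ∈ Finset.Icc (i + k) (j + k), ε l = ∏ l ∈ Finset.Icc i j, ε (l + k) := by
  rw [← Finset.map_add_right_Icc, Finset.prod_map]
  rfl

lemma shift_sum (f : ℕ → ℤ) (k a b : ℕ) :
    ∑ j ∈ Finset.Ico (a + k) (b + k), f j = ∑ j ∈ Finset.Ico a b, f (j + k) := by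
  rw [← Finset.map_add_right_Ico, Finset.sum_map]
  rfl

lemma S_eq (n k : ℕ) (hk1 : 1 ≤ k) (hkn : k ≤ n) (ε : ℕ → ℤ) :
    (∑ i ∈ Finset.range n, ∑ j ∈ Finset.Ico i n,
        (if k - 1 ∈ Finset.Icc i j then 0 else ∏ l ∈ Finset.Icc i j, ε l)) =
      TA (k - 1) ε + TA (n - k) (fun i => ε (i + k)) := by
  set m := k - 1 with hmdef
  have hk : k = m + 1 := by omega
  have hmn : m < n := by omega
  rw [Finset.range_eq_Ico, ← Finset.sum_Ico_consecutive _ (Nat.zero_le k) hkn]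
  have h1 : (∑ i ∈ Finset.Ico 0 k, ∑ j ∈ Finset.Ico i n,
      (if m ∈ Finset.Icc i j then 0 else ∏ l ∈ Finset.Icc i j, ε l)) = TA m ε := by
    have hstep : ∀ i ∈ Finset.Ico 0 k,
        (∑ j ∈ Finset.Ico i n,
          (if m ∈ Finset.Icc i j then 0 else ∏ l ∈ Finset.Icc i j, ε l)) =
        ∑ j ∈ Finset.Ico i m, ∏ l ∈ Finset.Icc i j, ε l := by
      intro i hi
      rw [Finset.mem_Ico] at hi
      have him : i ≤ m := by omega
      rw [← Finset.sum_Ico_consecutive _ him (le_of_lt hmn)]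
      have e1 : (∑ j ∈ Finset.Ico i m,
          (if m ∈ Finset.Icc i j then 0 else ∏ l ∈ Finset.Icc i j, ε l)) =
          ∑ j ∈ Finset.Ico i m, ∏ l ∈ Finset.Icc i j, ε l := by
        apply Finset.sum_congr rfl
        intro j hj
        rw [Finset.mem_Ico] at hj
        rw [if_neg]
        simp only [Finset.mem_Icc]
        omega
      have e2 : (∑ j ∈ Finset.Ico m n,
          (if m ∈ Finset.Icc i j then 0 else ∏ l ∈ Finset.Icc i j, ε l)) = 0 := by
        apply Finset.sum_eq_zero
        intro j hj
        rw [Finset.mem_Ico] at hj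
        rw [if_pos]
        simp only [Finset.mem_Icc]
        omega
      rw [e1, e2, add_zero]
    rw [Finset.sum_congr rfl hstep, ← Finset.range_eq_Ico, hk, Finset.sum_range_succ]
    simp [TA]
  have h2 : (∑ i ∈ Finset.Ico k n, ∑ j ∈ Finset.Ico i n,
      (if m ∈ Finset.Icc i j then 0 else ∏ l ∈ Finset.Icc i j, ε l)) =
      TA (n - k) (fun i => ε (i + k)) := by
    have hn : n = (n - k) + k := by omega
    have hstep : ∀ i ∈ Finset.Ico k n,
        (∑ j ∈ Finset.Ico i n,
          (if m ∈ Finset.Icc i j then 0 else ∏ l ∈ Finset.Icc i j, ε l)) =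
        ∑ j ∈ Finset.Ico i n, ∏ l ∈ Finset.Icc i j, ε l := by
      intro i hi
      rw [Finset.mem_Ico] at hi
      apply Finset.sum_congr rfl
      intro j _
      rw [if_neg]
      simp only [Finset.mem_Icc]
      omega
    rw [Finset.sum_congr rfl hstep]
    have hIco : Finset.Ico k n = Finset.Ico (0 + k) ((n - k) + k) := by rw [Nat.zero_add, Nat.sub_add_cancel hkn]
    rw [hIco, shift_sum (fun i => ∑ j ∈ Finset.Ico i n, ∏ l ∈ Finset.Icc i j, ε l) k 0 (n - k)]
    rw [TA, Finset.range_eq_Ico]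
    apply Finset.sum_congr rfl
    intro i _
    have hIco2 : Finset.Ico (i + k) n = Finset.Ico (i + k) ((n - k) + k) := by rw [Nat.sub_add_cancel hkn]
    rw [hIco2, shift_sum (fun j => ∏ l ∈ Finset.Icc (i + k) j, ε l) k i (n - k)]
    exact Finset.sum_congr rfl fun j _ => shift_prod ε k i j
  rw [h1, h2]

/-- Flipping the sign of the `k`-th simple root (`1 ≤ k ≤ n`, i.e. index `k-1`):
`T_{A_n}({(-1)^{δ_{i,k}} ε_i}) = -T_{A_n}({ε_i}) + 2 T_{A_{k-1}}({ε_1,…,ε_{k-1}})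
+ 2 T_{A_{n-k}}({ε_{k+1},…,ε_n})`. -/
theorem stmt9 (n k : ℕ) (hk1 : 1 ≤ k) (hkn : k ≤ n)
    (ε : ℕ → ℤ) (hε : ∀ l, l < n → ε l = 1 ∨ ε l = -1) :
    TA n (fun i => if i = k - 1 then -ε i else ε i) =
      - TA n ε + 2 * TA (k - 1) ε + 2 * TA (n - k) (fun i => ε (i + k)) := by
  have key : TA n (fun i => if i = k - 1 then -ε i else ε i) =
      - TA n ε + 2 * (∑ i ∈ Finset.range n, ∑ j ∈ Finset.Ico i n,
        (if k - 1 ∈ Finset.Icc i j then 0 else ∏ l ∈ Finset.Icc i j, ε l)) := by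
    rw [TA, TA]
    rw [neg_eq_neg_one_mul, Finset.mul_sum, Finset.mul_sum]
    rw [← Finset.sum_add_distrib]
    apply Finset.sum_congr rfl
    intro i _
    rw [Finset.mul_sum, Finset.mul_sum, ← Finset.sum_add_distrib]
    apply Finset.sum_congr rfl
    intro j _
    rw [prod_flip]
    split <;> ring
  rw [key, S_eq n k hk1 hkn ε]
  ring
end

section
/- In the setting of the D_n root system (positive roots: e_i ± e_j for i < j, expressed in simple roots α_1,...,α_n), the sign-sum satisfies T_{D_n}({ε_i}) = (1 + ε_{n-1} ε_n) · T_{A_{n-1}}({ε_1,...,ε_{n-1}}). In particular if ε_{n-1} ε_n = -1 then T_{D_n} = 0. -/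
/-- The sign-sum `T_{D_n}({ε_i}) = ∑_{α ∈ Δ₊(D_n)} ∏_i ε_i^{m_i(α)}` over the
positive roots of `D_n`, written in terms of the simple roots
`α_1, …, α_n` (0-indexed here as `0, …, n-1`, with `n-2` and `n-1` the two
fork nodes `α_{n-1} = e_{n-1} - e_n`, `α_n = e_{n-1} + e_n`):
* `e_i - e_j = α_i + ⋯ + α_{j-1}` for `i < j ≤ n`;
* `e_i + e_n = α_i + ⋯ + α_{n-2} + α_n` for `i ≤ n-1`;
* `e_i + e_j = α_i + ⋯ + α_{j-1} + 2(α_j + ⋯ + α_{n-2}) + α_{n-1} + α_n`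
  for `i < j ≤ n-1`. -/
def TD (n : ℕ) (ε : ℕ → ℤ) : ℤ :=
  (∑ i ∈ Finset.range n, ∑ j ∈ Finset.Ico (i + 1) n,
      ∏ l ∈ Finset.Icc i (j - 1), ε l) +
  (∑ i ∈ Finset.range (n - 1),
      (∏ l ∈ Finset.Ico i (n - 2), ε l) * ε (n - 1)) +
  (∑ i ∈ Finset.range (n - 1), ∑ j ∈ Finset.Ico (i + 1) (n - 1),
      (∏ l ∈ Finset.Icc i (j - 1), ε l) * (∏ l ∈ Finset.Ico j (n - 2), ε l) ^ 2
        * ε (n - 2) * ε (n - 1))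

/-- For the root system `D_n`:
`T_{D_n}({ε_i}) = (1 + ε_{n-1} ε_n) T_{A_{n-1}}({ε_1,…,ε_{n-1}})`;
in particular `T_{D_n} = 0` when `ε_{n-1} ε_n = -1`. -/
theorem stmt12 (n : ℕ) (hn : 2 ≤ n) (ε : ℕ → ℤ)
    (hε : ∀ l, l < n → ε l = 1 ∨ ε l = -1) :
    TD n ε = (1 + ε (n - 2) * ε (n - 1)) * TA (n - 1) ε ∧
    (ε (n - 2) * ε (n - 1) = -1 → TD n ε = 0) := by
  obtain ⟨m, rfl⟩ : ∃ m, n = m + 2 := ⟨n - 2, by omega⟩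
  have hsq : ∀ l, l < m + 2 → ε l * ε l = 1 := by
    intro l hl; rcases hε l hl with h | h <;> simp [h]
  have key : TD (m + 2) ε = (1 + ε m * ε (m + 1)) * TA (m + 1) ε := by
    have hA : (∑ i ∈ Finset.range (m + 2), ∑ j ∈ Finset.Ico (i + 1) (m + 2),
        ∏ l ∈ Finset.Icc i (j - 1), ε l) = TA (m + 1) ε := by
      rw [Finset.sum_range_succ]
      simp only [Finset.Ico_self, Finset.sum_empty, add_zero]
      unfold TA
      refine Finset.sum_congr rfl fun i hi => ?_
      rw [Finset.sum_Ico_eq_sum_range, Finset.sum_Ico_eq_sum_range]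
      refine Finset.sum_congr (by congr 1; omega) fun k _ => ?_
      rw [show i + 1 + k - 1 = i + k by omega]
    have hBC : ((∑ i ∈ Finset.range (m + 1), (∏ l ∈ Finset.Ico i m, ε l) * ε (m + 1)) +
        ∑ i ∈ Finset.range (m + 1), ∑ j ∈ Finset.Ico (i + 1) (m + 1),
          (∏ l ∈ Finset.Icc i (j - 1), ε l) * (∏ l ∈ Finset.Ico j m, ε l) ^ 2
            * ε m * ε (m + 1))
        = ε m * ε (m + 1) * TA (m + 1) ε := by
      unfold TA
      rw [Finset.mul_sum, ← Finset.sum_add_distrib]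
      refine Finset.sum_congr rfl fun i hi => ?_
      have him : i ≤ m := by
        have := Finset.mem_range.mp hi; omega
      have hs : ∀ j ∈ Finset.Ico (i + 1) (m + 1),
          (∏ l ∈ Finset.Icc i (j - 1), ε l) * (∏ l ∈ Finset.Ico j m, ε l) ^ 2
            * ε m * ε (m + 1)
          = (∏ l ∈ Finset.Icc i (j - 1), ε l) * (ε m * ε (m + 1)) := by
        intro j hj
        have h1 : (∏ l ∈ Finset.Ico j m, ε l) ^ 2 = 1 := by
          rw [sq, ← Finset.prod_mul_distrib]
          refine Finset.prod_eq_one fun l hl => ?_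
          have := Finset.mem_Ico.mp hl
          exact hsq l (by omega)
        rw [h1]; ring
      rw [Finset.sum_congr rfl hs]
      have hre : (∑ j ∈ Finset.Ico (i + 1) (m + 1),
          (∏ l ∈ Finset.Icc i (j - 1), ε l) * (ε m * ε (m + 1)))
          = ∑ j ∈ Finset.Ico i m, (∏ l ∈ Finset.Icc i j, ε l) * (ε m * ε (m + 1)) := by
        rw [Finset.sum_Ico_eq_sum_range, Finset.sum_Ico_eq_sum_range]
        refine Finset.sum_congr (by congr 1; omega) fun k _ => ?_
        rw [show i + 1 + k - 1 = i + k by omega]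
      rw [hre, Finset.sum_Ico_succ_top him, ← Finset.Ico_add_one_right_eq_Icc,
        Finset.prod_Ico_succ_top him, ← Finset.sum_mul]
      have hm := hsq m (by omega)
      linear_combination (-(ε (m + 1) * ∏ l ∈ Finset.Ico i m, ε l)) * hm
    show (∑ i ∈ Finset.range (m + 2), ∑ j ∈ Finset.Ico (i + 1) (m + 2),
        ∏ l ∈ Finset.Icc i (j - 1), ε l) +
      (∑ i ∈ Finset.range (m + 1), (∏ l ∈ Finset.Ico i m, ε l) * ε (m + 1)) +
      (∑ i ∈ Finset.range (m + 1), ∑ j ∈ Finset.Ico (i + 1) (m + 1),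
        (∏ l ∈ Finset.Icc i (j - 1), ε l) * (∏ l ∈ Finset.Ico j m, ε l) ^ 2
          * ε m * ε (m + 1))
      = (1 + ε m * ε (m + 1)) * TA (m + 1) ε
    rw [add_assoc, hA, hBC]; ring
  refine ⟨key, fun h => ?_⟩
  have h' : ε m * ε (m + 1) = -1 := h
  rw [key, h']
  ring
end

section
/- For the root system B_n with standard simple roots, T_{B_n}({ε_i}) = T_{A_n}({ε_i}) + T_{A_{n-1}}({ε_1,...,ε_{n-1}}), where T_{A_m}({ε}) = Σ_{1≤i≤j≤m} ε_i⋯ε_j and T_{B_n}({ε_i}) = Σ_{α∈Δ_+(B_n)} Π_i ε_i^{m_i(α)}. -/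
/-- The sign-sum `T_{B_n}({ε_i}) = ∑_{α ∈ Δ₊(B_n)} ∏_i ε_i^{m_i(α)}` over the
positive roots of `B_n` in terms of the simple roots `α_1, …, α_n`
(0-indexed as `0, …, n-1`, `α_n` the short root):
the positive roots are `α_i + ⋯ + α_j` for `i ≤ j ≤ n` and
`α_i + ⋯ + α_{j-1} + 2(α_j + ⋯ + α_n)` for `i < j ≤ n`. -/
def TB (n : ℕ) (ε : ℕ → ℤ) : ℤ :=
  TA n ε +
  ∑ i ∈ Finset.range n, ∑ j ∈ Finset.Ico (i + 1) n,
    (∏ l ∈ Finset.Icc i (j - 1), ε l) * (∏ l ∈ Finset.Icc j (n - 1), ε l) ^ 2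

/-- For the root system `B_n`:
`T_{B_n}({ε_i}) = T_{A_n}({ε_i}) + T_{A_{n-1}}({ε_1,…,ε_{n-1}})`. -/
theorem stmt13 (n : ℕ) (hn : 1 ≤ n) (ε : ℕ → ℤ)
    (hε : ∀ l, l < n → ε l = 1 ∨ ε l = -1) :
    TB n ε = TA n ε + TA (n - 1) ε := by
  unfold TB
  congr 1
  have h2 : ∀ i ∈ Finset.range n, ∀ j ∈ Finset.Ico (i + 1) n,
      (∏ l ∈ Finset.Icc i (j - 1), ε l) * (∏ l ∈ Finset.Icc j (n - 1), ε l) ^ 2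
      = ∏ l ∈ Finset.Icc i (j - 1), ε l := by
    intro i _ j _
    have hsq : (∏ l ∈ Finset.Icc j (n - 1), ε l) ^ 2 = 1 := by
      rw [← Finset.prod_pow]
      apply Finset.prod_eq_one
      intro l hl
      have hln : l < n := by
        have := (Finset.mem_Icc.mp hl).2
        omega
      rcases hε l hln with h | h <;> simp [h]
    rw [hsq, mul_one]
  rw [Finset.sum_congr rfl (fun i hi => Finset.sum_congr rfl (h2 i hi))]
  unfold TA
  obtain ⟨m, rfl⟩ : ∃ m, n = m + 1 := ⟨n - 1, by omega⟩
  simp only [Nat.add_sub_cancel]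
  rw [Finset.sum_range_succ]
  have hz : ∑ j ∈ Finset.Ico (m + 1) (m + 1), (∏ l ∈ Finset.Icc m (j - 1), ε l) = 0 := by
    simp
  rw [hz, add_zero]
  apply Finset.sum_congr rfl
  intro i _
  rw [Finset.sum_Ico_eq_sum_range, Finset.sum_Ico_eq_sum_range]
  have hm : m + 1 - (i + 1) = m - i := by omega
  rw [hm]
  apply Finset.sum_congr rfl
  intro k _
  have : i + 1 + k - 1 = i + k := by omega
  rw [this]
end

section
/- Let τ be an involutive automorphism of g with τ(E^α) = ε_α E^{τ(α)}, ε_α ∈ {±1}. If α is a root with α ≠ τ(α) and α + τ(α) is also a root, then ε_{α+τ(α)} = -1. -/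
/-- For an involutive automorphism `τ` with `τ (E α) = ε α • E (σ α)` and
structure constants `N` (`⁅E α, E β⁆ = N α β • E (α+β)`, `N α β = -N β α`):
if `α` is a root with `σ α ≠ α` and `α + σ α` also a root, then
`ε (α + σ α) = -1`. -/
theorem stmt16 {g : Type*} [LieRing g] [LieAlgebra ℂ g]
    {V : Type*} [AddCommGroup V] (Δ : Set V) (E : V → g)
    (hE : ∀ α ∈ Δ, E α ≠ 0)
    (N : V → V → ℂ)
    (hEE : ∀ α ∈ Δ, ∀ β ∈ Δ, α + β ∈ Δ → ⁅E α, E β⁆ = N α β • E (α + β))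
    (hN : ∀ α ∈ Δ, ∀ β ∈ Δ, α + β ∈ Δ → N α β ≠ 0)
    (hNanti : ∀ α β : V, N α β = -N β α)
    (σ : V → V) (hσΔ : ∀ α ∈ Δ, σ α ∈ Δ) (hσσ : ∀ α ∈ Δ, σ (σ α) = α)
    (hσadd : ∀ α ∈ Δ, ∀ β ∈ Δ, α + β ∈ Δ → σ (α + β) = σ α + σ β)
    (ε : V → ℂ) (hεpm : ∀ α ∈ Δ, ε α = 1 ∨ ε α = -1)
    (τ : g →ₗ[ℂ] g) (hhom : ∀ x y : g, τ ⁅x, y⁆ = ⁅τ x, τ y⁆)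
    (hτE : ∀ α ∈ Δ, τ (E α) = ε α • E (σ α))
    (hinv : ∀ x : g, τ (τ x) = x) :
    ∀ α ∈ Δ, σ α ≠ α → α + σ α ∈ Δ → ε (α + σ α) = -1 := by
  intro α hα hne hsum
  have hσα := hσΔ α hα
  have hσσα := hσσ α hα
  -- ε α * ε (σ α) = 1
  have h1 : ε α * ε (σ α) = 1 := by
    have h := hinv (E α)
    rw [hτE α hα, map_smul, hτE (σ α) hσα, hσσα, smul_smul] at h
    have h2 : (ε α * ε (σ α) - 1) • E α = 0 := by
      rw [sub_smul, one_smul, h, sub_self]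
    rcases smul_eq_zero.mp h2 with h3 | h3
    · linear_combination h3
    · exact absurd h3 (hE α hα)
  have hsum' : σ α + α ∈ Δ := by rwa [add_comm α (σ α)] at hsum
  have key := hhom (E α) (E (σ α))
  rw [hEE α hα (σ α) hσα hsum, hτE α hα, hτE (σ α) hσα, hσσα, map_smul,
    hτE (α + σ α) hsum, hσadd α hα (σ α) hσα hsum, hσσα,
    smul_lie, lie_smul, hEE (σ α) hσα α hα hsum',
    smul_smul, smul_smul, smul_smul, add_comm (σ α) α] at key
  have hcoef : N α (σ α) * ε (α + σ α) = ε α * ε (σ α) * N (σ α) α := by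
    have h2 : (N α (σ α) * ε (α + σ α) - ε α * ε (σ α) * N (σ α) α) • E (α + σ α) = 0 := by
      rw [sub_smul, key, sub_self]
    rcases smul_eq_zero.mp h2 with h3 | h3
    · linear_combination h3
    · exact absurd h3 (hE _ hsum)
  have hN0 := hN α hα (σ α) hσα hsum
  have hanti := hNanti α (σ α)
  field_simp at hcoef ⊢
  rw [h1, hanti] at hcoef
  field_simp at hcoef
  have hN0' : N (σ α) α ≠ 0 := fun h => hN0 (by rw [hanti, h, neg_zero])
  exact mul_left_cancel₀ hN0' (by linear_combination -hcoef)
end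

section
/- Let τ be an involutive automorphism of g inducing a root-system automorphism with τ(E^α) = ε_α E^{τ(α)}. Suppose α ≠ τ(α), β = τ(β), and α, β, α+β, τ(α)+β, α+β+τ(α) are all roots while α+τ(α) is not a root. Then ε_{α+β+τ(α)} = ε_β. -/
/-- For an involutive automorphism `τ` with `τ (E α) = ε α • E (σ α)`:
if `α ≠ σ α`, `β = σ β`, the elements `α, β, α+β, σ α + β, α + β + σ α` are
all roots but `α + σ α` is not a root, then `ε (α + β + σ α) = ε β`. -/
theorem stmt17 {g : Type*} [LieRing g] [LieAlgebra ℂ g]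
    {V : Type*} [AddCommGroup V] (Δ : Set V) (E : V → g)
    (hE : ∀ α ∈ Δ, E α ≠ 0)
    (N : V → V → ℂ)
    (hEE : ∀ α ∈ Δ, ∀ β ∈ Δ, α + β ∈ Δ → ⁅E α, E β⁆ = N α β • E (α + β))
    (hN : ∀ α ∈ Δ, ∀ β ∈ Δ, α + β ∈ Δ → N α β ≠ 0)
    (hNanti : ∀ α β : V, N α β = -N β α)
    (hEE0 : ∀ α ∈ Δ, ∀ β ∈ Δ, α + β ∉ Δ → α + β ≠ 0 → ⁅E α, E β⁆ = 0)
    (σ : V → V) (hσΔ : ∀ α ∈ Δ, σ α ∈ Δ) (hσσ : ∀ α ∈ Δ, σ (σ α) = α)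
    (hσadd : ∀ α ∈ Δ, ∀ β ∈ Δ, α + β ∈ Δ → σ (α + β) = σ α + σ β)
    (ε : V → ℂ) (hεpm : ∀ α ∈ Δ, ε α = 1 ∨ ε α = -1)
    (τ : g →ₗ[ℂ] g) (hhom : ∀ x y : g, τ ⁅x, y⁆ = ⁅τ x, τ y⁆)
    (hτE : ∀ α ∈ Δ, τ (E α) = ε α • E (σ α))
    (hinv : ∀ x : g, τ (τ x) = x) :
    ∀ α ∈ Δ, ∀ β ∈ Δ, σ α ≠ α → σ β = β →
      α + β ∈ Δ → σ α + β ∈ Δ → α + β + σ α ∈ Δ → α + σ α ∉ Δ →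
      ε (α + β + σ α) = ε β := by
  intro α hα β hβ hne hβfix hαβ hσαβ hαβσα hnot
  by_cases h0 : α + σ α = 0
  · have h : α + β + σ α = β := by
      have : α + β + σ α = β + (α + σ α) := by abel
      rw [this, h0, add_zero]
    rw [h]
  · have hσα : σ α ∈ Δ := hσΔ α hα
    -- key multiplicativity relation
    have key : ∀ γ ∈ Δ, ∀ δ ∈ Δ, γ + δ ∈ Δ →
        ε (γ + δ) * N γ δ = ε γ * ε δ * N (σ γ) (σ δ) := by
      intro γ hγ δ hδ hγδ
      have hmem : σ γ + σ δ ∈ Δ := by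
        rw [← hσadd γ hγ δ hδ hγδ]; exact hσΔ _ hγδ
      have h1 : τ ⁅E γ, E δ⁆ = (N γ δ * ε (γ + δ)) • E (σ γ + σ δ) := by
        rw [hEE γ hγ δ hδ hγδ, map_smul, hτE _ hγδ, smul_smul, hσadd γ hγ δ hδ hγδ]
      have h2 : τ ⁅E γ, E δ⁆ = (ε γ * ε δ * N (σ γ) (σ δ)) • E (σ γ + σ δ) := by
        rw [hhom, hτE γ hγ, hτE δ hδ, smul_lie, lie_smul,
          hEE _ (hσΔ γ hγ) _ (hσΔ δ hδ) hmem, smul_smul, smul_smul, mul_assoc]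
      have h3 := smul_left_injective ℂ (hE _ hmem) (h1.symm.trans h2)
      linear_combination h3
    -- ε α * ε (σ α) = 1
    have e4 : ε α * ε (σ α) = 1 := by
      have h1 : τ (τ (E α)) = (ε α * ε (σ α)) • E α := by
        rw [hτE α hα, map_smul, hτE _ hσα, hσσ α hα, smul_smul]
      have h2 : τ (τ (E α)) = (1 : ℂ) • E α := by rw [hinv, one_smul]
      exact smul_left_injective ℂ (hE α hα) (h1.symm.trans h2)
    have hβσα : β + σ α ∈ Δ := by rwa [add_comm]
    have hmem1 : α + (β + σ α) ∈ Δ := by rwa [← add_assoc]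
    -- Jacobi
    have jz : ⁅E α, E (σ α)⁆ = 0 := hEE0 α hα _ hσα hnot h0
    have e3 : N α β * N (α + β) (σ α) = N β (σ α) * N α (β + σ α) := by
      have hl := lie_lie (E α) (E β) (E (σ α))
      rw [hEE α hα β hβ hαβ, smul_lie, hEE _ hαβ _ hσα hαβσα,
        hEE β hβ _ hσα hβσα, lie_smul, hEE α hα _ hβσα hmem1,
        jz, lie_zero, sub_zero, smul_smul, smul_smul] at hl
      have hl' : (N α β * N (α + β) (σ α)) • E (α + β + σ α)
          = (N β (σ α) * N α (β + σ α)) • E (α + β + σ α) := by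
        rw [hl, add_assoc]
      exact smul_left_injective ℂ (hE _ hαβσα) hl'
    have e1 : ε (α + β + σ α) * N (α + β) (σ α)
        = ε (α + β) * ε (σ α) * N (σ α + β) α := by
      have h := key (α + β) hαβ (σ α) hσα hαβσα
      rwa [hσσ α hα, hσadd α hα β hβ hαβ, hβfix] at h
    have e2 : ε (α + β) * N α β = ε α * ε β * N (σ α) β := by
      have h := key α hα β hβ hαβ
      rwa [hβfix] at h
    have ha : N α β ≠ 0 := hN α hα β hβ hαβ
    have hb : N (α + β) (σ α) ≠ 0 := hN _ hαβ _ hσα hαβσα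
    have hc1 : N β (σ α) = -N (σ α) β := hNanti β (σ α)
    have hc2 : N (σ α + β) α = -N α (σ α + β) := hNanti _ α
    have hc3 : N α (σ α + β) = N α (β + σ α) := by rw [add_comm (σ α) β]
    rw [hc2, hc3] at e1
    rw [hc1] at e3
    have final : ε (α + β + σ α) * (N α β * N (α + β) (σ α))
        = ε β * (N α β * N (α + β) (σ α)) := by
      linear_combination (N α β) * e1 - (ε (σ α) * N α (β + σ α)) * e2
        - (ε β * N (σ α) β * N α (β + σ α)) * e4 - ε β * e3
    exact mul_right_cancel₀ (mul_ne_zero ha hb) final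
end
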